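/- Let F = F(X) be a free group, let (v,w) be a disjoint pair of cyclic words (i.e., X = L(v) ⊔ L(w)), and let τ₁ be a Whitehead automorphism with multiplier a ∈ Λ(v) such that |τ₁(v)| + |τ₁(w)| < |v| + |w|. Define τ on X by τ(x) = τ₁(x) for x ∈ L(v) and τ(x) = x for x ∈ L(w). Then τ is a well-defined Whitehead automorphism, τ(v) = τ₁(v), τ(w) = w, |τ(v)| + |τ(w)| < |v| + |w|, and (τ(v), τ(w)) is disjoint. -/

import Mathlib

open FreeGroup

/-- The length of a cyclic word (conjugacy class): the minimal word length of a representative. -/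
noncomputable def cycLen {X : Type} [DecidableEq X] (c : ConjClasses (FreeGroup X)) : ℕ :=
  sInf {n | ∃ g : FreeGroup X, ConjClasses.mk g = c ∧ (FreeGroup.toWord g).length = n}

/-- An element of a free group is cyclically reduced if its first letter is not
the inverse of its last letter. -/
def IsCycRed {X : Type} [DecidableEq X] (g : FreeGroup X) : Prop :=
  ∀ x : X × Bool, (FreeGroup.toWord g).head? = some x →
    (FreeGroup.toWord g).getLast? ≠ some (x.1, !x.2)

/-- The set `L(c)` of letters of `X` occurring (up to inversion) in the cyclic word `c`. -/
def usedLetters {X : Type} [DecidableEq X] (c : ConjClasses (FreeGroup X)) : Set X :=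
  {x | ∃ g : FreeGroup X, ConjClasses.mk g = c ∧ IsCycRed g ∧ ∃ b : Bool, (x, b) ∈ FreeGroup.toWord g}

/-- The action of an automorphism of the free group on cyclic words (conjugacy classes). -/
def actC {X : Type} (φ : FreeGroup X ≃* FreeGroup X) (c : ConjClasses (FreeGroup X)) :
    ConjClasses (FreeGroup X) :=
  ConjClasses.map (φ : FreeGroup X →* FreeGroup X) c

/-- `τ` is a Whitehead automorphism of the second kind with multiplier `a ∈ X ∪ X⁻¹`. -/
def IsWhiteheadMult {X : Type} (a : X × Bool) (τ : FreeGroup X ≃* FreeGroup X) : Prop :=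
  ∀ x : X, τ (of x) ∈ ({of x, of x * FreeGroup.mk [a],
      (FreeGroup.mk [a])⁻¹ * of x, (FreeGroup.mk [a])⁻¹ * of x * FreeGroup.mk [a]} :
      Set (FreeGroup X))

/-- `τ` is a relabeling automorphism: it permutes the set `X ∪ X⁻¹`. -/
def IsRelabeling {X : Type} (τ : FreeGroup X ≃* FreeGroup X) : Prop :=
  ∀ x : X, ∃ y : X × Bool, τ (of x) = FreeGroup.mk [y]

/-- Whitehead automorphisms. -/
def IsWhitehead {X : Type} (τ : FreeGroup X ≃* FreeGroup X) : Prop :=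
  IsRelabeling τ ∨ ∃ a : X × Bool, IsWhiteheadMult a τ

open FreeGroup List

namespace WAux

variable {X : Type} [DecidableEq X]

/-- inverse of a letter -/
def li (u : X × Bool) : X × Bool := (u.1, !u.2)

@[simp] lemma li_li (u : X × Bool) : li (li u) = u := by simp [li]

lemma li_inj {u v : X × Bool} (h : li u = li v) : u = v := by
  simpa using congrArg li h

lemma ne_li_self (u : X × Bool) : u ≠ li u := by
  cases u with
  | mk x b => simp [li]

/-- the no-cancellation relation between adjacent letters -/
def Rd (u v : X × Bool) : Prop := ¬(u.1 = v.1 ∧ u.2 = !v.2)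

lemma rd_iff (u v : X × Bool) : Rd u v ↔ u ≠ li v := by
  constructor
  · rintro h rfl; exact h ⟨rfl, rfl⟩
  · rintro h ⟨h1, h2⟩
    exact h (by cases u; cases v; simp_all [li])

lemma rd_iff' (u v : X × Bool) : Rd u v ↔ v ≠ li u := by
  rw [rd_iff]
  constructor
  · rintro h rfl; exact h (by simp [li])
  · rintro h rfl; exact h (by simp [li])

/-- A chain-reduced word is its own reduction. -/
lemma reduce_eq_self {l : List (X × Bool)} (h : l.Chain' Rd) : reduce l = l := by
  induction l with
  | nil => rfl
  | cons u t ih =>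
    have ht := ih h.tail
    rw [reduce.cons, ht]
    cases t with
    | nil => rfl
    | cons v t' =>
      have : Rd u v := (List.isChain_cons_cons.1 h).1
      simp only [Rd] at this
      simp [this]

lemma exists_decomp_of_not_chain :
    ∀ (l : List (X × Bool)), ¬ l.Chain' Rd →
      ∃ (L2 : List (X × Bool)) (x : X) (b : Bool) (L3 : List (X × Bool)),
        l = L2 ++ (x, b) :: (x, !b) :: L3
  | [], h => absurd List.isChain_nil h
  | [u], h => absurd (List.isChain_singleton u) h
  | u :: v :: t, h => by
    unfold List.Chain' at h
    rw [List.isChain_cons_cons] at h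
    push_neg at h
    by_cases huv : Rd u v
    · obtain ⟨L2, x, b, L3, hL⟩ := exists_decomp_of_not_chain (v :: t) (h huv)
      exact ⟨u :: L2, x, b, L3, by rw [List.cons_append, ← hL]⟩
    · simp only [Rd, not_not] at huv
      obtain ⟨h1, h2⟩ := huv
      refine ⟨[], u.1, u.2, t, ?_⟩
      have : v = (u.1, !u.2) := by
        cases u; cases v; simp_all
      rw [this]
      simp

/-- The word of any free group element is chain-reduced. -/
lemma chain'_toWord (g : FreeGroup X) : (toWord g).Chain' Rd := by
  by_contra h
  obtain ⟨L2, x, b, L3, hd⟩ := exists_decomp_of_not_chain _ h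
  exact FreeGroup.reduce.not (L₁ := toWord g) (by rw [reduce_toWord]; exact hd)

lemma toWord_mk_of_chain {l : List (X × Bool)} (h : l.Chain' Rd) :
    toWord (FreeGroup.mk l) = l := by
  rw [toWord_mk, reduce_eq_self h]

lemma chain'_invRev {l : List (X × Bool)} (h : l.Chain' Rd) :
    (invRev l).Chain' Rd := by
  unfold List.Chain'
  rw [invRev, List.isChain_reverse]
  refine (List.isChain_map _).2 ?_
  refine h.imp ?_
  intro a b hab
  show Rd (b.1, !b.2) (a.1, !a.2)
  rw [rd_iff] at hab ⊢
  intro hc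
  exact hab (by cases a; cases b; simp_all [li])

def CycW (l : List (X × Bool)) : Prop := ∀ u, l.head? = some u → l.getLast? ≠ some (li u)

lemma mk_singleton_inv (u : X × Bool) : (FreeGroup.mk [u])⁻¹ = FreeGroup.mk [li u] := by
  rw [inv_mk]; simp [invRev, li]

lemma invRev_concat (l : List (X × Bool)) (u : X × Bool) :
    invRev (l ++ [u]) = li u :: invRev l := by simp [invRev, li]

lemma cycw_singleton (u : X × Bool) : CycW [u] := by
  intro z hz h
  have h1 : u = z := by simpa using hz
  have h2 : u = li z := by simpa using h
  exact ne_li_self z (h1.symm.trans h2)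

lemma conj_core (m : List (X × Bool)) : m.Chain' Rd →
    ∀ c : List (X × Bool), c ≠ [] → c.Chain' Rd → CycW c →
    ∃ p c' : List (X × Bool), (p ++ c' ++ invRev p).Chain' Rd ∧
      FreeGroup.mk m * FreeGroup.mk c * (FreeGroup.mk m)⁻¹ =
        FreeGroup.mk (p ++ c' ++ invRev p) ∧
      (∀ u ∈ c', u ∈ c) ∧ c' ≠ [] := by
  induction m using List.reverseRecOn with
  | nil =>
    intro _ c hc hch hcw
    refine ⟨[], c, by simpa using hch, ?_, fun u hu => hu, hc⟩
    rw [← FreeGroup.one_eq_mk]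
    simp
  | append_singleton m' y ih =>
    intro hm c hc hch hcw
    have hm' : m'.Chain' Rd := hm.prefix (List.prefix_append m' [y])
    have hsplit : FreeGroup.mk (m' ++ [y]) = FreeGroup.mk m' * FreeGroup.mk [y] := by
      rw [FreeGroup.mul_mk]
    have glue : ∀ c₁ : List (X × Bool),
        FreeGroup.mk [y] * FreeGroup.mk c * (FreeGroup.mk [y])⁻¹ = FreeGroup.mk c₁ →
        c₁ ≠ [] → c₁.Chain' Rd → CycW c₁ → (∀ u ∈ c₁, u ∈ c) →
        ∃ p c' : List (X × Bool), (p ++ c' ++ invRev p).Chain' Rd ∧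
          FreeGroup.mk (m' ++ [y]) * FreeGroup.mk c * (FreeGroup.mk (m' ++ [y]))⁻¹ =
            FreeGroup.mk (p ++ c' ++ invRev p) ∧
          (∀ u ∈ c', u ∈ c) ∧ c' ≠ [] := by
      intro c₁ h1 hne₁ hch₁ hcw₁ hmem₁
      obtain ⟨p, c', hchain, heq, hmem, hne⟩ := ih hm' c₁ hne₁ hch₁ hcw₁
      refine ⟨p, c', hchain, ?_, fun u hu => hmem₁ _ (hmem u hu), hne⟩
      rw [hsplit]
      have : FreeGroup.mk m' * FreeGroup.mk [y] * FreeGroup.mk c *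
          (FreeGroup.mk m' * FreeGroup.mk [y])⁻¹ =
          FreeGroup.mk m' * (FreeGroup.mk [y] * FreeGroup.mk c * (FreeGroup.mk [y])⁻¹) *
            (FreeGroup.mk m')⁻¹ := by group
      rw [this, h1, heq]
    by_cases hA : c.head? = some (li y)
    · -- left rotation
      cases c with
      | nil => exact absurd rfl hc
      | cons d t =>
        simp only [List.head?_cons, Option.some.injEq] at hA
        subst hA
        have e1 : FreeGroup.mk (li y :: t) = (FreeGroup.mk [y])⁻¹ * FreeGroup.mk t := by
          rw [mk_singleton_inv, FreeGroup.mul_mk]; rfl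
        have h1 : FreeGroup.mk [y] * FreeGroup.mk (li y :: t) * (FreeGroup.mk [y])⁻¹ =
            FreeGroup.mk (t ++ [li y]) := by
          rw [e1, ← FreeGroup.mul_mk, ← mk_singleton_inv]
          group
        refine glue (t ++ [li y]) h1 (by simp) ?_ ?_ ?_
        · -- chain
          rcases List.eq_nil_or_concat t with rfl | ⟨t₀, x, ht⟩
          · exact List.isChain_singleton _
          · rw [List.concat_eq_append] at ht
            subst ht
            unfold List.Chain'
            rw [List.isChain_append]
            refine ⟨hch.tail, List.isChain_singleton _, ?_⟩
            intro z hz w hw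
            simp only [List.head?_cons, Option.mem_def, Option.some.injEq] at hw
            subst hw
            have hgl : (li y :: (t₀ ++ [x])).getLast? = some z := by
              rw [← List.singleton_append, List.getLast?_append_of_ne_nil _ (by simp)]
              exact hz
            have hcwy := hcw (li y) rfl
            rw [hgl] at hcwy
            rw [rd_iff]
            intro hzz
            exact hcwy (by rw [hzz, li_li])
        · -- CycW
          intro u hu
          rcases List.eq_nil_or_concat t with rfl | ⟨t₀, x, ht⟩
          · simp only [List.nil_append, List.head?_cons, Option.some.injEq] at hu
            intro h
            have h' : some (li y) = some (li u) := by simpa using h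
            have h3 : y = u := li_inj (Option.some.inj h')
            exact ne_li_self y (h3.trans hu.symm)
          · rw [List.concat_eq_append] at ht
            subst ht
            rw [List.head?_append_of_ne_nil _ (by simp)] at hu
            rw [List.getLast?_concat]
            have hcc : Rd (li y) u := by
              rcases t₀ with _ | ⟨v, t₁⟩
              · simp only [List.nil_append, List.head?_cons, Option.some.injEq] at hu
                subst hu
                exact (List.isChain_cons_cons.1 hch).1
              · simp only [List.cons_append, List.head?_cons, Option.some.injEq] at hu
                subst hu
                exact (List.isChain_cons_cons.1 hch).1
            rw [rd_iff] at hcc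
            intro hEq
            injection hEq with hEq
            exact hcc (by rw [hEq])
        · intro u hu
          rcases List.mem_append.1 hu with h | h
          · exact List.mem_cons_of_mem _ h
          · simp only [List.mem_singleton] at h
            subst h
            exact List.mem_cons_self
    · by_cases hB : c.getLast? = some y
      · -- right rotation
        have hdecomp : ∃ t, c = t ++ [y] := by
          rcases List.eq_nil_or_concat c with rfl | ⟨t, x, ht⟩
          · exact absurd rfl hc
          · rw [List.concat_eq_append] at ht
            subst ht
            rw [List.getLast?_concat] at hB
            exact ⟨t, by rw [Option.some.inj hB]⟩
        obtain ⟨t, rfl⟩ := hdecomp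
        · have h1 : FreeGroup.mk [y] * FreeGroup.mk (t ++ [y]) * (FreeGroup.mk [y])⁻¹ =
              FreeGroup.mk (y :: t) := by
            rw [← FreeGroup.mul_mk]
            have : FreeGroup.mk [y] * (FreeGroup.mk t * FreeGroup.mk [y]) *
                (FreeGroup.mk [y])⁻¹ = FreeGroup.mk [y] * FreeGroup.mk t := by group
            rw [this, FreeGroup.mul_mk]
            rfl
          refine glue (y :: t) h1 (by simp) ?_ ?_ ?_
          · -- chain
            cases t with
            | nil => exact List.isChain_singleton _
            | cons v t₁ =>
              unfold List.Chain'
              rw [List.isChain_cons_cons]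
              refine ⟨?_, (hch.prefix (List.prefix_append _ [y]))⟩
              rw [rd_iff]
              intro hvy
              apply hA
              rw [List.head?_append_of_ne_nil _ (by simp)]
              simp only [List.head?_cons, Option.some.injEq]
              rw [hvy, li_li]
          · -- CycW
            intro u hu
            have hu' : y = u := by simpa using hu
            subst hu'
            cases t with
            | nil =>
              intro h
              exact ne_li_self y (by simpa using h)
            | cons v t₁ =>
              rw [List.getLast?_cons_cons]
              have hj := (List.isChain_append.1 hch).2.2
              intro hEq
              have := hj _ hEq y rfl
              rw [rd_iff] at this
              exact this rfl
          · intro u hu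
            rcases List.mem_cons.1 hu with rfl | h
            · exact List.mem_append.2 (Or.inr (by simp))
            · exact List.mem_append.2 (Or.inl h)
      · -- no cancellation
        refine ⟨m' ++ [y], c, ?_, ?_, fun u hu => hu, hc⟩
        · unfold List.Chain'
          rw [List.isChain_append]
          refine ⟨?_, chain'_invRev hm, ?_⟩
          · rw [List.isChain_append]
            refine ⟨hm, hch, ?_⟩
            intro z hz w hw
            rw [List.getLast?_concat] at hz
            simp only [Option.mem_def, Option.some.injEq] at hz
            subst hz
            rw [rd_iff']
            intro hwy
            exact hA (by rw [Option.mem_def] at hw; rw [hw, hwy])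
          · intro z hz w hw
            rw [invRev_concat, List.head?_cons] at hw
            simp only [Option.mem_def, Option.some.injEq] at hw
            subst hw
            rw [List.getLast?_append_of_ne_nil _ hc] at hz
            rw [rd_iff]
            intro hzy
            exact hB (by rw [Option.mem_def] at hz; rw [hz, hzy, li_li])
        · rw [FreeGroup.inv_mk, FreeGroup.mul_mk, FreeGroup.mul_mk]

lemma exists_cycred_aux : ∀ (n : ℕ) (g : FreeGroup X), (toWord g).length = n →
    ∃ z c : FreeGroup X, g = z * c * z⁻¹ ∧ CycW (toWord c) ∧
      ∀ u ∈ toWord c, u ∈ toWord g := by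
  intro n
  induction n using Nat.strong_induction_on with
  | _ n ih =>
    intro g hlen
    by_cases hg : CycW (toWord g)
    · exact ⟨1, g, by group, hg, fun u hu => hu⟩
    · simp only [CycW, not_forall, not_not] at hg
      obtain ⟨x, hx1, hx2⟩ := hg
      rcases hw : toWord g with _ | ⟨d, t⟩
      · rw [hw] at hx1; exact absurd hx1 (by simp)
      · rw [hw, List.head?_cons, Option.some.injEq] at hx1
        subst hx1
        rcases List.eq_nil_or_concat t with rfl | ⟨mid, e, ht⟩
        · rw [hw] at hx2
          have : d = li d := by simpa using hx2
          exact absurd this (ne_li_self d)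
        · rw [List.concat_eq_append] at ht
          subst ht
          rw [hw] at hx2
          have he : e = li d := by
            have hgl : (d :: (mid ++ [e])).getLast? = some e := by
              rw [← List.singleton_append, List.getLast?_append_of_ne_nil _ (by simp),
                List.getLast?_concat]
            rw [hgl] at hx2
            exact Option.some.inj hx2
          subst he
          have hgeq : g = FreeGroup.mk [d] * FreeGroup.mk mid * (FreeGroup.mk [d])⁻¹ := by
            rw [mk_singleton_inv, FreeGroup.mul_mk, FreeGroup.mul_mk,
              show ([d] ++ mid ++ [li d] : List (X × Bool)) = d :: (mid ++ [li d]) by simp,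
              ← hw, mk_toWord]
          have hmidchain : mid.Chain' Rd := by
            have hch := chain'_toWord g
            rw [hw] at hch
            exact hch.infix ⟨[d], [li d], by simp⟩
          have hmidw : toWord (FreeGroup.mk mid) = mid := toWord_mk_of_chain hmidchain
          have hlt : (toWord (FreeGroup.mk mid)).length < n := by
            rw [hmidw, ← hlen, hw]
            simp
          obtain ⟨z₁, c, hz₁, hcy, hmem⟩ := ih _ hlt (FreeGroup.mk mid) rfl
          refine ⟨FreeGroup.mk [d] * z₁, c, ?_, hcy, ?_⟩
          · rw [hgeq, hz₁]; group
          · intro u hu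
            have hu2 := hmem u hu
            rw [hmidw] at hu2
            exact List.mem_cons_of_mem _ (List.mem_append.2 (Or.inl hu2))

lemma exists_cycred (g : FreeGroup X) :
    ∃ z c : FreeGroup X, g = z * c * z⁻¹ ∧ CycW (toWord c) ∧
      ∀ u ∈ toWord c, u ∈ toWord g :=
  exists_cycred_aux (toWord g).length g rfl

lemma letters_conj {g' u : FreeGroup X} (hcr : CycW (toWord g')) (k : FreeGroup X)
    (h : g' = k * u * k⁻¹) : ∀ p ∈ toWord g', p ∈ toWord u := by
  obtain ⟨z, c, hu, hc, hmem⟩ := exists_cycred u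
  by_cases hcnil : toWord c = []
  · have hc1 : c = 1 := toWord_eq_nil_iff.1 hcnil
    have hg1 : g' = 1 := by rw [h, hu, hc1]; group
    rw [hg1]
    intro p hp
    simp at hp
  · have hg' : g' = FreeGroup.mk (toWord (k * z)) * FreeGroup.mk (toWord c) *
        (FreeGroup.mk (toWord (k * z)))⁻¹ := by
      rw [mk_toWord, mk_toWord, h, hu]; group
    obtain ⟨p, c', hchain, heq, hmem', hne⟩ :=
      conj_core (toWord (k * z)) (chain'_toWord _) (toWord c) hcnil (chain'_toWord c) hc
    have htw : toWord g' = p ++ c' ++ invRev p := by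
      rw [hg', heq, toWord_mk_of_chain hchain]
    cases p with
    | nil =>
      intro q hq
      rw [htw] at hq
      simp only [List.nil_append, invRev_empty, List.append_nil] at hq
      exact hmem _ (hmem' _ hq)
    | cons d p₀ =>
      exfalso
      have hhead : (toWord g').head? = some d := by
        rw [htw]
        rw [List.head?_append_of_ne_nil _ (by simp)]
        rw [List.head?_append_of_ne_nil _ (by simp)]
        rfl
      have hlast : (toWord g').getLast? = some (li d) := by
        rw [htw]
        have hinv : invRev (d :: p₀) = invRev p₀ ++ [li d] := by
          simp [invRev, li]
        rw [hinv, List.getLast?_append_of_ne_nil _ (by simp), List.getLast?_concat]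
      exact hcr d hhead (by rw [hlast])

end WAux

namespace WAux

variable {X : Type} [DecidableEq X]

lemma of_eq_mk (x : X) : FreeGroup.of x = FreeGroup.mk [(x, true)] := rfl

lemma mk_single_cases (a : X × Bool) :
    FreeGroup.mk [a] = of a.1 ∨ FreeGroup.mk [a] = (of a.1)⁻¹ := by
  rcases a with ⟨x, b⟩
  cases b
  · right
    rw [of_eq_mk, inv_mk]
    simp [invRev]
  · left
    rfl

/-- A Whitehead automorphism with multiplier `a` fixes `of a.1`. -/
lemma mult_fixed {a : X × Bool} {τ₁ : FreeGroup X ≃* FreeGroup X}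
    (hτ₁ : IsWhiteheadMult a τ₁) : τ₁ (of a.1) = of a.1 := by
  have hone : τ₁ (of a.1) ≠ 1 := by
    intro h
    have : of a.1 = 1 := by
      have := congrArg τ₁.symm h
      simpa using this
    have := congrArg toWord this
    simp at this
  have hsq : τ₁ (of a.1) ≠ of a.1 * of a.1 := by
    intro hsq
    set F : FreeGroup X →* Multiplicative (X →₀ ZMod 2) :=
      FreeGroup.lift (fun x => Multiplicative.ofAdd (Finsupp.single x (1 : ZMod 2))) with hF
    set F' : FreeGroup X →* Multiplicative (X →₀ ZMod 2) :=
      F.comp (τ₁.symm : FreeGroup X ≃* FreeGroup X).toMonoidHom with hF'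
    have h1 : F (of a.1) = F' (τ₁ (of a.1)) := by
      simp [hF', MonoidHom.comp_apply]
    rw [hsq, _root_.map_mul] at h1
    have h2 : F' (of a.1) * F' (of a.1) = 1 := by
      set y := F' (of a.1)
      have h : y.toAdd + y.toAdd = 0 := by
        ext u
        exact CharTwo.add_self_eq_zero _
      have : (y * y).toAdd = (1 : Multiplicative (X →₀ ZMod 2)).toAdd := by simpa using h
      exact Multiplicative.toAdd.injective this
    rw [h2] at h1
    have h3 : Multiplicative.ofAdd (Finsupp.single a.1 (1 : ZMod 2)) =
        (1 : Multiplicative (X →₀ ZMod 2)) := by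
      rw [← FreeGroup.lift_apply_of (f := fun x => Multiplicative.ofAdd (Finsupp.single x (1 : ZMod 2)))
        (x := a.1)]
      exact h1
    have h4 : (Finsupp.single a.1 (1 : ZMod 2)) = 0 := by
      simpa using h3
    rw [Finsupp.single_eq_zero] at h4
    exact one_ne_zero h4
  have := hτ₁ a.1
  simp only [Set.mem_insert_iff, Set.mem_singleton_iff] at this
  rcases mk_single_cases a with hA | hA <;> rw [hA] at this <;>
    rcases this with h | h | h | h
  · exact h
  · exact absurd h hsq
  · exact absurd (by rw [h]; group) hone
  · rw [h]; group
  · exact h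
  · exact absurd (by rw [h]; group) hone
  · simp only [inv_inv] at h
    exact absurd h hsq
  · rw [h]; group

/-- Two monoid homs agree on `mk l` if they agree on the letters of `l`. -/
lemma hom_eq_word (φ ψ : FreeGroup X →* FreeGroup X) :
    ∀ l : List (X × Bool), (∀ p ∈ l, φ (of p.1) = ψ (of p.1)) →
      φ (FreeGroup.mk l) = ψ (FreeGroup.mk l)
  | [], _ => by rw [← FreeGroup.one_eq_mk, _root_.map_one, _root_.map_one]
  | p :: t, h => by
    have hsplit : FreeGroup.mk (p :: t) = FreeGroup.mk [p] * FreeGroup.mk t := by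
      rw [FreeGroup.mul_mk]; rfl
    have ht := hom_eq_word φ ψ t (fun q hq => h q (List.mem_cons_of_mem _ hq))
    have hp : φ (FreeGroup.mk [p]) = ψ (FreeGroup.mk [p]) := by
      rcases mk_single_cases p with hp | hp <;> rw [hp]
      · exact h p (List.mem_cons_self)
      · rw [_root_.map_inv, _root_.map_inv, h p (List.mem_cons_self)]
    rw [hsplit, _root_.map_mul, _root_.map_mul, hp, ht]

/-- Letters in the image of a word under a homomorphism. -/
lemma letters_map (φ : FreeGroup X →* FreeGroup X) (S : Set X) :
    ∀ l : List (X × Bool), (∀ p ∈ l, ∀ q ∈ toWord (φ (of p.1)), q.1 ∈ S) →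
      ∀ q ∈ toWord (φ (FreeGroup.mk l)), q.1 ∈ S
  | [], _ => by
    rw [← FreeGroup.one_eq_mk, _root_.map_one, toWord_one]
    intro q hq
    simp at hq
  | p :: t, h => by
    intro q hq
    have hsplit : FreeGroup.mk (p :: t) = FreeGroup.mk [p] * FreeGroup.mk t := by
      rw [FreeGroup.mul_mk]; rfl
    rw [hsplit, _root_.map_mul] at hq
    have hq2 := (toWord_mul_sublist _ _).subset hq
    rcases List.mem_append.1 hq2 with hq3 | hq3
    · rcases mk_single_cases p with hp | hp <;> rw [hp] at hq3
      · exact h p (List.mem_cons_self) q hq3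
      · rw [_root_.map_inv, toWord_inv] at hq3
        have : li q ∈ toWord (φ (of p.1)) := by
          rw [invRev] at hq3
          rw [List.mem_reverse] at hq3
          obtain ⟨r, hr, hrq⟩ := List.mem_map.1 hq3
          have : li q = r := by rw [← hrq]; simp [li]
          rwa [this]
        have := h p (List.mem_cons_self) _ this
        simpa [li] using this
    · exact letters_map φ S t (fun r hr => h r (List.mem_cons_of_mem _ hr)) q hq3

/-- toWord length of image is at most word length, for letter-length-≤1 homs. -/
lemma length_map_le {Y : Type} [DecidableEq Y] (φ : FreeGroup X →* FreeGroup Y)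
    (hφ : ∀ x : X, (toWord (φ (of x))).length ≤ 1) :
    ∀ l : List (X × Bool), (toWord (φ (FreeGroup.mk l))).length ≤ l.length
  | [] => by rw [← FreeGroup.one_eq_mk, _root_.map_one, toWord_one]; exact le_rfl
  | p :: t => by
    have hsplit : FreeGroup.mk (p :: t) = FreeGroup.mk [p] * FreeGroup.mk t := by
      rw [FreeGroup.mul_mk]; rfl
    rw [hsplit, _root_.map_mul]
    have h1 : (toWord (φ (FreeGroup.mk [p]))).length ≤ 1 := by
      rcases mk_single_cases p with hp | hp <;> rw [hp]
      · exact hφ p.1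
      · rw [_root_.map_inv, toWord_inv, invRev_length]
        exact hφ p.1
    calc (toWord (φ (FreeGroup.mk [p]) * φ (FreeGroup.mk t))).length
        ≤ (toWord (φ (FreeGroup.mk [p]))).length + (toWord (φ (FreeGroup.mk t))).length := by
          have := (toWord_mul_sublist (φ (FreeGroup.mk [p])) (φ (FreeGroup.mk t))).length_le
          simpa using this
      _ ≤ 1 + t.length := Nat.add_le_add h1 (length_map_le φ hφ t)
      _ = (p :: t).length := by simp [Nat.add_comm]

end WAux

namespace WAux

variable {X : Type} [DecidableEq X]

lemma cycW_iff_isCycRed (g : FreeGroup X) : CycW (toWord g) ↔ IsCycRed g := Iff.rfl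

lemma cycLen_map_le {Y : Type} [DecidableEq Y] (φ : FreeGroup X →* FreeGroup Y)
    (hφ : ∀ x : X, (toWord (φ (of x))).length ≤ 1) (C : ConjClasses (FreeGroup X)) :
    cycLen (ConjClasses.map φ C) ≤ cycLen C := by
  obtain ⟨g0, hg0⟩ := ConjClasses.exists_rep C
  have hne : {n | ∃ g : FreeGroup X, ConjClasses.mk g = C ∧ (toWord g).length = n}.Nonempty :=
    ⟨_, g0, hg0, rfl⟩
  obtain ⟨g, hg, hlen⟩ := Nat.sInf_mem hne
  have h1 : cycLen (ConjClasses.map φ C) ≤ (toWord (φ g)).length :=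
    Nat.sInf_le ⟨φ g, by rw [← hg]; rfl, rfl⟩
  have h2 : (toWord (φ g)).length ≤ (toWord g).length := by
    conv_lhs => rw [← mk_toWord (x := g)]
    exact length_map_le φ hφ (toWord g)
  have h3 : (toWord g).length = cycLen C := hlen
  omega

end WAux


open WAux in
theorem disjoint_pair_reduction {X : Type} [DecidableEq X]
    (v w : ConjClasses (FreeGroup X)) (a : X × Bool) (τ₁ : FreeGroup X ≃* FreeGroup X)
    (hpart_union : usedLetters v ∪ usedLetters w = Set.univ)
    (hpart_disj : usedLetters v ∩ usedLetters w = ∅)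
    (hτ₁ : IsWhiteheadMult a τ₁) (ha : a.1 ∈ usedLetters v)
    (hdec : cycLen (actC τ₁ v) + cycLen (actC τ₁ w) < cycLen v + cycLen w) :
    ∃ τ : FreeGroup X ≃* FreeGroup X, IsWhiteheadMult a τ ∧
      (∀ x ∈ usedLetters v, τ (of x) = τ₁ (of x)) ∧
      (∀ x ∈ usedLetters w, τ (of x) = of x) ∧
      actC τ v = actC τ₁ v ∧ actC τ w = w ∧
      cycLen (actC τ v) + cycLen (actC τ w) < cycLen v + cycLen w ∧
      usedLetters (actC τ v) ∩ usedLetters (actC τ w) = ∅ := by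
  classical
  obtain ⟨gv, hgvmk, hgvcyc, b0, hb0⟩ := ha
  set S := usedLetters v with hS
  have hdisj : ∀ x, x ∈ usedLetters w → x ∉ S := by
    intro x hxw hxv
    have hmem : x ∈ usedLetters v ∩ usedLetters w := ⟨hxv, hxw⟩
    rw [hpart_disj] at hmem
    exact hmem
  have ha1 : a.1 ∈ S := ⟨gv, hgvmk, hgvcyc, b0, hb0⟩
  have hfix := WAux.mult_fixed hτ₁
  set A := FreeGroup.mk [a] with hA
  have hfixA : τ₁ A = A := by
    rcases WAux.mk_single_cases a with h | h <;> rw [hA, h]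
    · exact hfix
    · rw [_root_.map_inv, hfix]
  have hfixA' : τ₁.symm A = A := τ₁.symm_apply_eq.2 hfixA.symm
  have hsymm4 : ∀ x : X,
      (τ₁ (of x) = of x ∧ τ₁.symm (of x) = of x) ∨
      (τ₁ (of x) = of x * A ∧ τ₁.symm (of x) = of x * A⁻¹) ∨
      (τ₁ (of x) = A⁻¹ * of x ∧ τ₁.symm (of x) = A * of x) ∨
      (τ₁ (of x) = A⁻¹ * of x * A ∧ τ₁.symm (of x) = A * of x * A⁻¹) := by
    intro x
    have h4 := hτ₁ x
    simp only [Set.mem_insert_iff, Set.mem_singleton_iff] at h4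
    rcases h4 with h | h | h | h
    · exact Or.inl ⟨h, τ₁.symm_apply_eq.2 h.symm⟩
    · refine Or.inr (Or.inl ⟨h, τ₁.symm_apply_eq.2 ?_⟩)
      have : τ₁ (of x * A⁻¹) = of x := by
        rw [_root_.map_mul, _root_.map_inv, hfixA, h, hA]; group
      exact this.symm
    · refine Or.inr (Or.inr (Or.inl ⟨h, τ₁.symm_apply_eq.2 ?_⟩))
      have : τ₁ (A * of x) = of x := by
        rw [_root_.map_mul, hfixA, h, hA]; group
      exact this.symm
    · refine Or.inr (Or.inr (Or.inr ⟨h, τ₁.symm_apply_eq.2 ?_⟩))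
      have : τ₁ (A * of x * A⁻¹) = of x := by
        rw [_root_.map_mul, _root_.map_mul, _root_.map_inv, hfixA, h, hA]; group
      exact this.symm
  let f : FreeGroup X →* FreeGroup X :=
    FreeGroup.lift (fun x => if x ∈ S then τ₁ (of x) else of x)
  let gi : FreeGroup X →* FreeGroup X :=
    FreeGroup.lift (fun x => if x ∈ S then τ₁.symm (of x) else of x)
  have hfo : ∀ x : X, f (of x) = if x ∈ S then τ₁ (of x) else of x := fun x =>
    FreeGroup.lift_apply_of
  have hgo : ∀ x : X, gi (of x) = if x ∈ S then τ₁.symm (of x) else of x := fun x =>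
    FreeGroup.lift_apply_of
  have hfa : f (of a.1) = of a.1 := by rw [hfo, if_pos ha1, hfix]
  have hga : gi (of a.1) = of a.1 := by
    rw [hgo, if_pos ha1]
    exact τ₁.symm_apply_eq.2 hfix.symm
  have hfA : f A = A := by
    rcases WAux.mk_single_cases a with h | h <;> rw [hA, h]
    · exact hfa
    · rw [_root_.map_inv, hfa]
  have hgA : gi A = A := by
    rcases WAux.mk_single_cases a with h | h <;> rw [hA, h]
    · exact hga
    · rw [_root_.map_inv, hga]
  have hgf : gi.comp f = MonoidHom.id _ := by
    apply FreeGroup.ext_hom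
    intro x
    simp only [MonoidHom.comp_apply, MonoidHom.id_apply]
    by_cases hx : x ∈ S
    · rw [hfo, if_pos hx]
      rcases hsymm4 x with ⟨h1, h2⟩ | ⟨h1, h2⟩ | ⟨h1, h2⟩ | ⟨h1, h2⟩ <;> rw [h1]
      · rw [hgo, if_pos hx, h2]
      · rw [_root_.map_mul, hgA, hgo, if_pos hx, h2]; group
      · rw [_root_.map_mul, _root_.map_inv, hgA, hgo, if_pos hx, h2]; group
      · rw [_root_.map_mul, _root_.map_mul, _root_.map_inv, hgA, hgo, if_pos hx, h2]; group
    · rw [hfo, if_neg hx, hgo, if_neg hx]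
  have hfg : f.comp gi = MonoidHom.id _ := by
    apply FreeGroup.ext_hom
    intro x
    simp only [MonoidHom.comp_apply, MonoidHom.id_apply]
    by_cases hx : x ∈ S
    · rw [hgo, if_pos hx]
      rcases hsymm4 x with ⟨h1, h2⟩ | ⟨h1, h2⟩ | ⟨h1, h2⟩ | ⟨h1, h2⟩ <;> rw [h2]
      · rw [hfo, if_pos hx, h1]
      · rw [_root_.map_mul, _root_.map_inv, hfA, hfo, if_pos hx, h1]; group
      · rw [_root_.map_mul, hfA, hfo, if_pos hx, h1]; group
      · rw [_root_.map_mul, _root_.map_mul, _root_.map_inv, hfA, hfo, if_pos hx, h1]; group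
    · rw [hgo, if_neg hx, hfo, if_neg hx]
  set τ : FreeGroup X ≃* FreeGroup X := MonoidHom.toMulEquiv f gi hgf hfg with hτdef
  have hτof : ∀ x : X, τ (of x) = f (of x) := fun x => rfl
  have hlet_v : ∀ p ∈ toWord gv, p.1 ∈ S := fun p hp =>
    ⟨gv, hgvmk, hgvcyc, p.2, by rwa [Prod.mk.eta]⟩
  have hfgv : f gv = τ₁ gv := by
    have h := WAux.hom_eq_word f τ₁.toMonoidHom (toWord gv) (fun p hp => by
      simp only [MulEquiv.coe_toMonoidHom]
      rw [hfo, if_pos (hlet_v p hp)])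
    rw [mk_toWord] at h
    exact h
  have hactv : actC τ v = actC τ₁ v := by
    rw [← hgvmk]
    show ConjClasses.mk (f gv) = ConjClasses.mk (τ₁ gv)
    rw [hfgv]
  obtain ⟨u0, hu0⟩ := ConjClasses.exists_rep w
  obtain ⟨z0, c0, hzc, hc0cyc, hc0mem⟩ := WAux.exists_cycred u0
  have hc0mk : ConjClasses.mk c0 = w := by
    rw [← hu0]
    exact ConjClasses.mk_eq_mk_iff_isConj.2 (isConj_iff.2 ⟨z0, hzc.symm⟩)
  have hc0cyc' : IsCycRed c0 := hc0cyc
  have hlet_w : ∀ p ∈ toWord c0, p.1 ∈ usedLetters w := fun p hp =>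
    ⟨c0, hc0mk, hc0cyc', p.2, by rwa [Prod.mk.eta]⟩
  have hfc0 : f c0 = c0 := by
    have h := WAux.hom_eq_word f (MonoidHom.id _) (toWord c0) (fun p hp => by
      simp only [MonoidHom.id_apply]
      rw [hfo, if_neg (hdisj _ (hlet_w p hp))])
    rw [mk_toWord] at h
    simpa using h
  have hactw : actC τ w = w := by
    rw [← hc0mk]
    show ConjClasses.mk (f c0) = ConjClasses.mk c0
    rw [hfc0]
  -- cycLen w ≤ cycLen (actC τ₁ w) via killing/reinserting the letter a.1
  let kh : FreeGroup X →* FreeGroup {y : X // y ≠ a.1} :=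
    FreeGroup.lift (fun x => if h : x = a.1 then 1 else of ⟨x, h⟩)
  let sh : FreeGroup {y : X // y ≠ a.1} →* FreeGroup X := FreeGroup.lift (fun y => of y.1)
  have hko : ∀ x, kh (of x) = if h : x = a.1 then 1 else of ⟨x, h⟩ := fun x =>
    FreeGroup.lift_apply_of
  have hso : ∀ y, sh (of y) = of y.1 := fun y => FreeGroup.lift_apply_of
  have hkA : kh A = 1 := by
    rcases WAux.mk_single_cases a with h | h <;> rw [hA, h]
    · rw [hko]; simp
    · rw [_root_.map_inv, hko]; simp
  have hkτ : ∀ g, kh (τ₁ g) = kh g := by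
    have hcomp : kh.comp τ₁.toMonoidHom = kh := by
      apply FreeGroup.ext_hom
      intro x
      simp only [MonoidHom.comp_apply, MulEquiv.coe_toMonoidHom]
      rcases hsymm4 x with ⟨h1, _⟩ | ⟨h1, _⟩ | ⟨h1, _⟩ | ⟨h1, _⟩ <;> rw [h1]
      · rw [_root_.map_mul, hkA, mul_one]
      · rw [_root_.map_mul, _root_.map_inv, hkA]; simp
      · rw [_root_.map_mul, _root_.map_mul, _root_.map_inv, hkA]; simp
    intro g
    exact DFunLike.congr_fun hcomp g
  have hlenk : ∀ x : X, (toWord (kh (of x))).length ≤ 1 := by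
    intro x
    rw [hko]
    split_ifs with h
    · simp
    · simp
  have hlens : ∀ y, (toWord (sh (of y))).length ≤ 1 := by
    intro y
    rw [hso]
    simp
  have hmapk : ConjClasses.map kh (actC τ₁ w) = ConjClasses.map kh w := by
    rw [← hu0]
    show ConjClasses.mk (kh (τ₁ u0)) = ConjClasses.mk (kh u0)
    rw [hkτ]
  have hskc0 : sh (kh c0) = c0 := by
    have h := WAux.hom_eq_word (sh.comp kh) (MonoidHom.id _) (toWord c0) (fun p hp => by
      have hne : p.1 ≠ a.1 := by
        intro he
        exact hdisj a.1 (he ▸ hlet_w p hp) ha1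
      simp only [MonoidHom.comp_apply, MonoidHom.id_apply]
      rw [hko, dif_neg hne, hso])
    rw [mk_toWord] at h
    simpa using h
  have hwle : cycLen w ≤ cycLen (actC τ₁ w) := by
    have e1 : ConjClasses.map sh (ConjClasses.map kh (actC τ₁ w)) = w := by
      rw [hmapk, ← hc0mk]
      show ConjClasses.mk (sh (kh c0)) = ConjClasses.mk c0
      rw [hskc0]
    calc cycLen w = cycLen (ConjClasses.map sh (ConjClasses.map kh (actC τ₁ w))) := by rw [e1]
      _ ≤ cycLen (ConjClasses.map kh (actC τ₁ w)) := WAux.cycLen_map_le sh hlens _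
      _ ≤ cycLen (actC τ₁ w) := WAux.cycLen_map_le kh hlenk _
  have hAword : toWord A = [a] := WAux.toWord_mk_of_chain (List.isChain_singleton a)
  have hletters_img : ∀ q ∈ toWord (τ₁ gv), q.1 ∈ S := by
    have hlm := WAux.letters_map τ₁.toMonoidHom S (toWord gv) (fun p hp q hq => by
      have hpS := hlet_v p hp
      simp only [MulEquiv.coe_toMonoidHom] at hq
      rcases hsymm4 p.1 with ⟨h1, _⟩ | ⟨h1, _⟩ | ⟨h1, _⟩ | ⟨h1, _⟩ <;> rw [h1] at hq
      · rw [toWord_of] at hq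
        simp only [List.mem_singleton] at hq
        rw [hq]
        exact hpS
      · have hq2 := (toWord_mul_sublist _ _).subset hq
        rw [toWord_of, hAword] at hq2
        rcases List.mem_append.1 hq2 with h | h
        · simp only [List.mem_singleton] at h
          rw [h]; exact hpS
        · simp only [List.mem_singleton] at h
          rw [h]; exact ha1
      · have hq2 := (toWord_mul_sublist _ _).subset hq
        rw [toWord_of, toWord_inv, hAword] at hq2
        rcases List.mem_append.1 hq2 with h | h
        · have : q = WAux.li a := by simpa [invRev, WAux.li] using h
          rw [this]; exact ha1
        · simp only [List.mem_singleton] at h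
          rw [h]; exact hpS
      · have hq2 := (toWord_mul_sublist _ _).subset hq
        rcases List.mem_append.1 hq2 with h | h
        · have hq3 := (toWord_mul_sublist _ _).subset h
          rw [toWord_of, toWord_inv, hAword] at hq3
          rcases List.mem_append.1 hq3 with h2 | h2
          · have : q = WAux.li a := by simpa [invRev, WAux.li] using h2
            rw [this]; exact ha1
          · simp only [List.mem_singleton] at h2
            rw [h2]; exact hpS
        · rw [hAword] at h
          simp only [List.mem_singleton] at h
          rw [h]; exact ha1)
    intro q hq
    apply hlm
    rw [mk_toWord]
    exact hq
  refine ⟨τ, ?_, ?_, ?_, hactv, hactw, ?_, ?_⟩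
  · -- IsWhiteheadMult
    intro x
    by_cases hx : x ∈ S
    · rw [hτof, hfo, if_pos hx]
      exact hτ₁ x
    · rw [hτof, hfo, if_neg hx]
      exact Set.mem_insert _ _
  · intro x hx
    rw [hτof, hfo, if_pos hx]
  · intro x hx
    rw [hτof, hfo, if_neg (hdisj x hx)]
  · rw [hactv, hactw]
    omega
  · rw [hactw]
    apply Set.eq_empty_iff_forall_notMem.2
    rintro x ⟨hx1, hx2⟩
    obtain ⟨g', hg'mk, hg'cyc, b, hb⟩ := hx1
    rw [hactv] at hg'mk
    have hmkτ₁gv : actC τ₁ v = ConjClasses.mk (τ₁ gv) := by rw [← hgvmk]; rfl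
    have hconj : IsConj (τ₁ gv) g' :=
      ConjClasses.mk_eq_mk_iff_isConj.1 (by rw [← hmkτ₁gv, hg'mk])
    obtain ⟨kk, hkk⟩ := isConj_iff.1 hconj
    have hsubw := WAux.letters_conj (u := τ₁ gv) hg'cyc kk hkk.symm
    exact hdisj x hx2 (hletters_img (x, b) (hsubw (x, b) hb))
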